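/- Let R be a ring and M an automorphism-invariant right R-module with injective hull E(M). If E(M) = E₁ ⊕ E₂ ⊕ E₃ with E₁ ≅ E₂ as R-modules, then M = (M ∩ E₁) ⊕ (M ∩ E₂) ⊕ (M ∩ E₃). -/

import Mathlib

universe u v w

section Defs

variable (A : Type u) [Ring A]

/-- `N` is an essential submodule of `M`: it meets every nonzero submodule nontrivially. -/
def IsEssentialIn {M : Type v} [AddCommGroup M] [Module A M] (N : Submodule A M) : Prop :=
  ∀ K : Submodule A M, K ≠ ⊥ → N ⊓ K ≠ ⊥

/-- `i : M →ₗ[A] E` realizes `E` as an injective hull of `M`: `E` is injective and the image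
of `M` is an essential submodule of `E`. -/
def IsInjHull (M : Type v) [AddCommGroup M] [Module A M]
    (E : Type v) [AddCommGroup E] [Module A E] (i : M →ₗ[A] E) : Prop :=
  Function.Injective i ∧ Module.Injective A E ∧ IsEssentialIn A (LinearMap.range i)

/-- `M` is automorphism-invariant: for any injective hull `E` of `M`, the image of `M` is
invariant under every automorphism of `E`. -/
def IsAutInv (M : Type v) [AddCommGroup M] [Module A M] : Prop :=
  ∀ (E : Type v) [AddCommGroup E] [Module A E] (i : M →ₗ[A] E),
    IsInjHull A M E i →
      ∀ σ : E ≃ₗ[A] E, (LinearMap.range i).map (σ : E →ₗ[A] E) ≤ LinearMap.range i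

/-- `M` is quasi-injective: every homomorphism from a submodule of `M` into `M` extends to an
endomorphism of `M`. -/
def IsQuasiInj (M : Type v) [AddCommGroup M] [Module A M] : Prop :=
  ∀ (N : Submodule A M) (f : ↥N →ₗ[A] M), ∃ g : M →ₗ[A] M, ∀ n : ↥N, g ↑n = f n

/-- `M` is pseudo-injective: every monomorphism from a submodule of `M` into `M` extends to an
endomorphism of `M`. -/
def IsPseudoInj (M : Type v) [AddCommGroup M] [Module A M] : Prop :=
  ∀ (N : Submodule A M) (f : ↥N →ₗ[A] M), Function.Injective f →
    ∃ g : M →ₗ[A] M, ∀ n : ↥N, g ↑n = f n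

/-- `M` is quasi-projective: every homomorphism `M → M/N` lifts to an endomorphism of `M`. -/
def IsQuasiProj (M : Type v) [AddCommGroup M] [Module A M] : Prop :=
  ∀ (N : Submodule A M) (f : M →ₗ[A] M ⧸ N), ∃ g : M →ₗ[A] M, N.mkQ.comp g = f

/-- `M` is an indecomposable module: nonzero and not an (internal) direct sum of two nonzero
submodules. -/
def IsIndecomposableMod (M : Type v) [AddCommGroup M] [Module A M] : Prop :=
  Nontrivial M ∧ ∀ N₁ N₂ : Submodule A M, IsCompl N₁ N₂ → N₁ = ⊥ ∨ N₂ = ⊥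

/-- `M` is a uniform module: nonzero, and any two nonzero submodules intersect nontrivially. -/
def IsUniformMod (M : Type v) [AddCommGroup M] [Module A M] : Prop :=
  Nontrivial M ∧ ∀ N₁ N₂ : Submodule A M, N₁ ≠ ⊥ → N₂ ≠ ⊥ → N₁ ⊓ N₂ ≠ ⊥

/-- `M` is uniserial: its submodules are linearly ordered by inclusion. -/
def IsUniserialMod (M : Type v) [AddCommGroup M] [Module A M] : Prop :=
  ∀ N₁ N₂ : Submodule A M, N₁ ≤ N₂ ∨ N₂ ≤ N₁

/-- `M` is a local module: it has a unique maximal submodule containing every proper submodule. -/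
def IsLocalMod (M : Type v) [AddCommGroup M] [Module A M] : Prop :=
  ∃ N : Submodule A M, N ≠ ⊤ ∧ ∀ K : Submodule A M, K ≠ ⊤ → K ≤ N

/-- The socle of `M`: the sum of all simple submodules. -/
def SocleOf (M : Type v) [AddCommGroup M] [Module A M] : Submodule A M :=
  sSup {S : Submodule A M | IsSimpleModule A ↥S}

/-- The socle of a submodule `N` of `M`, as a submodule of `M`: the sum of all simple
submodules of `M` contained in `N`. -/
def SocleIn {M : Type v} [AddCommGroup M] [Module A M] (N : Submodule A M) : Submodule A M :=
  sSup {S : Submodule A M | S ≤ N ∧ IsSimpleModule A ↥S}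

/-- `M` is a singular module: every element is annihilated by an essential (right) ideal. -/
def IsSingularMod (M : Type v) [AddCommGroup M] [Module A M] : Prop :=
  ∀ m : M, IsEssentialIn A (LinearMap.ker (LinearMap.toSpanSingleton A M m))

/-- `M` is a cyclic module. -/
def IsCyclicMod (M : Type v) [AddCommGroup M] [Module A M] : Prop :=
  ∃ m : M, Submodule.span A {m} = ⊤

end Defs

section RingDefs

variable (R : Type u) [Ring R]

/-- `R` is of right automorphism-invariant type: every finitely generated indecomposable
right `R`-module (i.e. left `Rᵐᵒᵖ`-module) is automorphism-invariant. -/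
def IsRAIType : Prop :=
  ∀ (M : Type u) [AddCommGroup M] [Module Rᵐᵒᵖ M], Module.Finite Rᵐᵒᵖ M →
    IsIndecomposableMod Rᵐᵒᵖ M → IsAutInv Rᵐᵒᵖ M

/-- `R` is an indecomposable ring: it is nonzero and is not the direct sum of two nonzero
two-sided ideals. -/
def IsIndecRing : Prop :=
  Nontrivial R ∧ ¬ ∃ I J : Ideal R, (∀ x ∈ I, ∀ r : R, x * r ∈ I) ∧
    (∀ x ∈ J, ∀ r : R, x * r ∈ J) ∧ I ≠ ⊥ ∧ J ≠ ⊥ ∧ IsCompl I J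

/-- The right ideal `xR` of `R`. -/
def RtIdeal (x : R) : Submodule Rᵐᵒᵖ R := Submodule.span Rᵐᵒᵖ ({x} : Set R)

/-- The right ideal `xJ(R)` of `R`, where `J(R)` is the Jacobson radical. -/
def RtIdealJ (x : R) : Submodule Rᵐᵒᵖ R :=
  Submodule.span Rᵐᵒᵖ ((fun j => x * j) '' ((Ideal.jacobson (⊥ : Ideal R) : Ideal R) : Set R))

/-- The module `xR / xJ(R)`. -/
abbrev TopQuot (x : R) :=
  ↥(RtIdeal R x) ⧸ Submodule.comap (RtIdeal R x).subtype (RtIdealJ R x)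

end RingDefs

/-- If `M` is automorphism-invariant, essential in its injective hull
`E = E₁ ⊕ E₂ ⊕ E₃` with `E₁ ≅ E₂`, then `M = (M ∩ E₁) ⊕ (M ∩ E₂) ⊕ (M ∩ E₃)`. -/
theorem stmt_5 (R : Type u) [Ring R]
    (E : Type v) [AddCommGroup E] [Module Rᵐᵒᵖ E] (hinjE : Module.Injective Rᵐᵒᵖ E)
    (M : Submodule Rᵐᵒᵖ E) (hess : IsEssentialIn Rᵐᵒᵖ M)
    (hinv : ∀ σ : E ≃ₗ[Rᵐᵒᵖ] E, M.map (σ : E →ₗ[Rᵐᵒᵖ] E) ≤ M)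
    (E₁ E₂ E₃ : Submodule Rᵐᵒᵖ E)
    (h1 : Disjoint E₁ (E₂ ⊔ E₃)) (h2 : Disjoint E₂ (E₁ ⊔ E₃)) (h3 : Disjoint E₃ (E₁ ⊔ E₂))
    (hsum : E₁ ⊔ E₂ ⊔ E₃ = ⊤) (hiso : Nonempty (↥E₁ ≃ₗ[Rᵐᵒᵖ] ↥E₂)) :
    M = (M ⊓ E₁) ⊔ (M ⊓ E₂) ⊔ (M ⊓ E₃) := by
  obtain ⟨φ⟩ := hiso
  have hc1 : IsCompl E₁ (E₂ ⊔ E₃) :=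
    ⟨h1, codisjoint_iff.2 (by rw [← sup_assoc]; exact hsum)⟩
  have hc2 : IsCompl E₂ (E₁ ⊔ E₃) :=
    ⟨h2, codisjoint_iff.2 (by rw [← sup_assoc, sup_comm E₂ E₁]; exact hsum)⟩
  set π₁ := E₁.linearProjOfIsCompl _ hc1 with hπ₁def
  set π₂ := E₂.linearProjOfIsCompl _ hc2 with hπ₂def
  set n₁ : E →ₗ[Rᵐᵒᵖ] E := E₂.subtype ∘ₗ (φ : ↥E₁ →ₗ[Rᵐᵒᵖ] ↥E₂) ∘ₗ π₁ with hn₁def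
  set n₂ : E →ₗ[Rᵐᵒᵖ] E := E₁.subtype ∘ₗ (φ.symm : ↥E₂ →ₗ[Rᵐᵒᵖ] ↥E₁) ∘ₗ π₂ with hn₂def
  have hn₁mem : ∀ x : E, n₁ x ∈ E₂ := fun x => (φ (π₁ x)).2
  have hn₂mem : ∀ x : E, n₂ x ∈ E₁ := fun x => (φ.symm (π₂ x)).2
  have hn₁sq : ∀ x : E, n₁ (n₁ x) = 0 := by
    intro x
    have h0 : π₁ ((φ (π₁ x) : ↥E₂) : E) = 0 :=
      Submodule.projectionOnto_apply_right hc1 ⟨_,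
        (le_sup_left (α := Submodule Rᵐᵒᵖ E) (φ (π₁ x)).2)⟩
    simp [hn₁def, h0]
  have hn₂sq : ∀ x : E, n₂ (n₂ x) = 0 := by
    intro x
    have h0 : π₂ ((φ.symm (π₂ x) : ↥E₁) : E) = 0 :=
      Submodule.projectionOnto_apply_right hc2 ⟨_,
        (le_sup_left (α := Submodule Rᵐᵒᵖ E) (φ.symm (π₂ x)).2)⟩
    simp [hn₂def, h0]
  -- a nilpotent perturbation of the identity is an automorphism, so `n x ∈ M` for `x ∈ M`
  have key : ∀ (n : E →ₗ[Rᵐᵒᵖ] E), (∀ x : E, n (n x) = 0) → ∀ x ∈ M, n x ∈ M := by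
    intro n hn x hx
    have h₁ : (LinearMap.id + n).comp (LinearMap.id - n) = LinearMap.id := by
      ext y; simp [LinearMap.sub_apply, LinearMap.add_apply, map_sub, hn y]
    have h₂ : (LinearMap.id - n).comp (LinearMap.id + n) = LinearMap.id := by
      ext y; simp [LinearMap.sub_apply, LinearMap.add_apply, map_add, hn y]
    set σ : E ≃ₗ[Rᵐᵒᵖ] E := LinearEquiv.ofLinear (LinearMap.id + n) (LinearMap.id - n) h₁ h₂
      with hσ
    have hσx : σ x ∈ M := hinv σ ⟨x, hx, rfl⟩
    have : σ x = x + n x := by simp [hσ]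
    have hsum : x + n x ∈ M := this ▸ hσx
    simpa using M.sub_mem hsum hx
  -- decompose an arbitrary `x ∈ M`
  apply le_antisymm
  · intro x hx
    have hne1 : n₁ x ∈ M := key n₁ hn₁sq x hx
    have hne2 : n₂ x ∈ M := key n₂ hn₂sq x hx
    -- `n₂ (n₁ x) = π₁ x` as an element of `E`
    have hπ₂n₁ : π₂ ((φ (π₁ x) : ↥E₂) : E) = φ (π₁ x) :=
      Submodule.linearProjOfIsCompl_apply_left hc2 (φ (π₁ x))
    have ha : n₂ (n₁ x) = (π₁ x : E) := by
      simp [hn₂def, hn₁def, hπ₂n₁]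
    have hπ₁n₂ : π₁ ((φ.symm (π₂ x) : ↥E₁) : E) = φ.symm (π₂ x) :=
      Submodule.linearProjOfIsCompl_apply_left hc1 (φ.symm (π₂ x))
    have hb : n₁ (n₂ x) = (π₂ x : E) := by
      simp [hn₁def, hn₂def, hπ₁n₂]
    have haM : (π₁ x : E) ∈ M := ha ▸ key n₂ hn₂sq _ hne1
    have hbM : (π₂ x : E) ∈ M := hb ▸ key n₁ hn₁sq _ hne2
    set r : E := x - (π₁ x : E) - (π₂ x : E) with hr
    have hrM : r ∈ M := M.sub_mem (M.sub_mem hx haM) hbM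
    -- `r ∈ E₃`
    have hx1 : x - (π₁ x : E) ∈ E₂ ⊔ E₃ := by
      have h := Submodule.projection_add_projection_eq_self hc1 x
      have : x - (π₁ x : E) = ((E₂ ⊔ E₃).linearProjOfIsCompl _ hc1.symm x : E) :=
        sub_eq_iff_eq_add'.2 h.symm
      rw [this]; exact Submodule.coe_mem _
    have hx2 : x - (π₂ x : E) ∈ E₁ ⊔ E₃ := by
      have h := Submodule.projection_add_projection_eq_self hc2 x
      have : x - (π₂ x : E) = ((E₁ ⊔ E₃).linearProjOfIsCompl _ hc2.symm x : E) :=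
        sub_eq_iff_eq_add'.2 h.symm
      rw [this]; exact Submodule.coe_mem _
    have hr23 : r ∈ E₂ ⊔ E₃ := by
      have : r = (x - (π₁ x : E)) - (π₂ x : E) := by rw [hr]
      rw [this]
      exact Submodule.sub_mem _ hx1 (le_sup_left (α := Submodule Rᵐᵒᵖ E) (π₂ x).2)
    have hr13 : r ∈ E₁ ⊔ E₃ := by
      have : r = (x - (π₂ x : E)) - (π₁ x : E) := by rw [hr]; abel
      rw [this]
      exact Submodule.sub_mem _ hx2 (le_sup_left (α := Submodule Rᵐᵒᵖ E) (π₁ x).2)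
    have hmod : (E₃ ⊔ E₂) ⊓ (E₁ ⊔ E₃) = E₃ := by
      rw [sup_inf_assoc_of_le _ (le_sup_right : E₃ ≤ E₁ ⊔ E₃), disjoint_iff.1 h2, sup_bot_eq]
    have hrE₃ : r ∈ E₃ := by
      rw [← hmod]
      exact ⟨by rwa [sup_comm E₃ E₂], hr13⟩
    -- assemble
    have hxeq : x = ((π₁ x : E) + (π₂ x : E)) + r := by rw [hr]; abel
    rw [hxeq]
    exact Submodule.add_mem_sup
      (Submodule.add_mem_sup ⟨haM, (π₁ x).2⟩ ⟨hbM, (π₂ x).2⟩) ⟨hrM, hrE₃⟩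
  · exact sup_le (sup_le inf_le_left inf_le_left) inf_le_left
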